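/- Natural revision satisfies the revised conditional: for every connected preorder C and conditional P>A with P∧A satisfiable, the order C nat(P>A) satisfies P>A, i.e., every minimal model of P∧A in C nat(P>A) is strictly below every model of P∧¬A. -/

import Mathlib

open Classical

/- Models are elements of a finite type `M`; propositional formulas are identified with
their sets of models (`Set M`).  A connected preorder (ordered partition
`[C(0),…,C(m)]`, classes possibly empty) is represented by its rank function
`r : M → ℕ`, where `r I` is the index of the class of `I`.  Equality of orders means
equality of the induced binary relations (`sameOrd`). -/

/-- least class index containing a model of `F` -/
noncomputable def minidx {M : Type*} (r : M → ℕ) (F : Set M) : ℕ := sInf (r '' F)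

/-- greatest class index containing a model of `F` -/
noncomputable def maxidx {M : Type*} (r : M → ℕ) (F : Set M) : ℕ := sSup (r '' F)

/-- propositional natural revision:
`C nat(A) = [C(minidx A)∩A, C(0),…,C(minidx A−1), C(minidx A)∖A, C(minidx A+1),…,C(m)]` -/
noncomputable def natSimple {M : Type*} (r : M → ℕ) (A : Set M) : M → ℕ :=
  fun I => if I ∈ A ∧ r I = minidx r A then 0 else r I + 1

/-- conditional natural revision: the models of `P∧¬A` in classes
`minidx(P)..minidx(P∧A)` are dropped below the other models of those classes. -/
noncomputable def natRev {M : Type*} (r : M → ℕ) (P A : Set M) : M → ℕ := fun I =>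
  if r I < minidx r P then r I
  else if r I ≤ minidx r (P ∩ A) then
    (if I ∈ P ∩ Aᶜ then r I + (minidx r (P ∩ A) - minidx r P + 1) else r I)
  else r I + (minidx r (P ∩ A) - minidx r P + 1)

/-- uncontingent revision: the models of `P∧¬A` in classes
`minidx(P)..maxidx(P∧A)` are dropped below the other models of those classes. -/
noncomputable def uncRev {M : Type*} (r : M → ℕ) (P A : Set M) : M → ℕ := fun I =>
  if r I < minidx r P then r I
  else if r I ≤ maxidx r (P ∩ A) then
    (if I ∈ P ∩ Aᶜ then r I + (maxidx r (P ∩ A) - minidx r P + 1) else r I)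
  else r I + (maxidx r (P ∩ A) - minidx r P + 1)

/-- lexicographic revision: `C lex(F) = [C(0)∩F,…,C(m)∩F, C(0)∖F,…,C(m)∖F]` -/
noncomputable def lexRev {M : Type*} [Fintype M] (r : M → ℕ) (F : Set M) : M → ℕ := fun I =>
  if I ∈ F then r I else r I + (Finset.univ.sup r + 1)

/-- line-down revision: the minimal models of `P∧A` are lifted to a new class just
above class `minidx(P∧¬A)`; all other models keep their classes. -/
noncomputable def dowRev {M : Type*} (r : M → ℕ) (P A : Set M) : M → ℕ := fun I =>
  if minidx r (P ∩ A) < minidx r (P ∩ Aᶜ) then r I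
  else if I ∈ P ∩ A ∧ r I = minidx r (P ∩ A) then minidx r (P ∩ Aᶜ)
  else if r I < minidx r (P ∩ Aᶜ) then r I
  else r I + 1

/-- an order satisfies the conditional `P>A` iff every minimal model of `P∧A`
is strictly below every model of `P∧¬A` -/
def satisfiesCond {M : Type*} (r : M → ℕ) (P A : Set M) : Prop :=
  ∀ I ∈ P ∩ A, (∀ J ∈ P ∩ A, r I ≤ r J) → ∀ K ∈ P ∩ Aᶜ, r I < r K

/-- the order viewed as a set of pairs `I ≤ J` -/
def ordRel {M : Type*} (r : M → ℕ) : Set (M × M) := {p | r p.1 ≤ r p.2}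

/-- difference of two orders: symmetric difference of their sets of pairs -/
def diffOrd {M : Type*} (r r' : M → ℕ) : Set (M × M) := symmDiff (ordRel r) (ordRel r')

/-- equality of the induced connected preorders -/
def sameOrd {M : Type*} (r r' : M → ℕ) : Prop := ∀ I J : M, (r I ≤ r J ↔ r' I ≤ r' J)

/-- natural revision satisfies the revised conditional. -/
theorem natural_satisfies {M : Type*} [Fintype M] (r : M → ℕ) (P A : Set M)
    (h : (P ∩ A).Nonempty) :
    satisfiesCond (natRev r P A) P A := by
  intro I hI hmin K hK
  set m := minidx r P with hm
  set n := minidx r (P ∩ A) with hn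
  have hmn : m ≤ n := csInf_le_csInf (OrderBot.bddBelow _) (h.image r) (Set.image_mono (Set.inter_subset_left))
  -- there is a model I0 of P∩A with r I0 = n
  obtain ⟨I0, hI0, hrI0⟩ : ∃ I0 ∈ P ∩ A, r I0 = n := by
    have := Nat.sInf_mem (h.image r)
    obtain ⟨x, hx, hxe⟩ := this
    exact ⟨x, hx, hxe⟩
  have hnm : ¬ n < m := not_lt.mpr hmn
  have hI0notC : I0 ∉ P ∩ Aᶜ := fun hc => hc.2 hI0.2
  have hnatI0 : natRev r P A I0 = n := by
    simp [natRev, hrI0, hnm, hI0notC]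
    exact fun _ => le_rfl
  have hIle : natRev r P A I ≤ n := hnatI0 ▸ hmin I0 hI0
  have hKm : m ≤ r K := Nat.sInf_le ⟨K, hK.1, rfl⟩
  have hKval : n + 1 ≤ natRev r P A K := by
    simp only [natRev]
    rw [if_neg (not_lt.mpr hKm)]
    by_cases hle : r K ≤ n
    · rw [if_pos hle, if_pos hK]
      omega
    · rw [if_neg hle]
      omega
  calc natRev r P A I ≤ n := hIle
    _ < natRev r P A K := by omega
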